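/- Let k be a perfect field and M a finite free W(k)-module with a cyclic Z/n-grading, an injective degree-one W(k)-linear operator Π, and an injective σ^{-1}-linear degree-(−1) operator V commuting with Π. Suppose for every graded index the induced map of V on Coker(Π : M_{j} → M_{j+1}) is bijective. Then Π induces a bijection on Lie = M/VM in each degree; hence if Π is required to be topologically nilpotent on M/VM, such a configuration is impossible (V must induce zero on some cokernel of Π). -/
import Mathlib


/-- Let `k` be a perfect field, `M` a finite free `W(k)`-module with a cyclic `ℤ/n`-grading
`M = ⊕_j M_j`, an injective degree-one linear operator `Π`, and an injective
`σ⁻¹`-semilinear degree-`(-1)` operator `V` commuting with `Π`.  Suppose that for every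
graded index `j` the map induced by `V` on `Coker (Π : M_j → M_{j+1})` is bijective, i.e.
`M_j = V(M_{j+1}) + Π(M_{j-1})` (surjectivity) and `V x ∈ Π(M_{j-1}) → x ∈ Π(M_j)` for
`x ∈ M_{j+1}` (injectivity).  Then `Π` induces a bijection on `Lie = M/VM` in each degree;
hence if `Π` is moreover (topologically) nilpotent on `M/VM`, such a configuration forces
`VM = M`, which is impossible for a nonzero Lie algebra: `V` must induce zero on some
cokernel of `Π`. -/
theorem stmt13 (p : ℕ) [Fact p.Prime] (k : Type*) [Field k] [CharP k p] [PerfectRing k p]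
    (n : ℕ) [NeZero n]
    (M : Type*) [AddCommGroup M] [Module (WittVector p k) M]
    [Module.Free (WittVector p k) M] [Module.Finite (WittVector p k) M]
    (V : M →ₛₗ[((WittVector.frobeniusEquiv p k).symm :
        WittVector p k →+* WittVector p k)] M)
    (hVinj : Function.Injective V)
    (Pim : Module.End (WittVector p k) M) (hPiminj : Function.Injective Pim)
    (hcomm : ∀ x : M, Pim (V x) = V (Pim x))
    (Mj : ZMod n → Submodule (WittVector p k) M)
    (hinternal : DirectSum.IsInternal Mj)
    (hVdeg : ∀ j : ZMod n, ∀ x ∈ Mj (j + 1), V x ∈ Mj j)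
    (hPimdeg : ∀ j : ZMod n, ∀ x ∈ Mj j, Pim x ∈ Mj (j + 1))
    (hVbij : ∀ j : ZMod n,
      (Mj j ≤ Submodule.map V (Mj (j + 1)) ⊔ Submodule.map Pim (Mj (j - 1))) ∧
      (∀ x ∈ Mj (j + 1), V x ∈ Submodule.map Pim (Mj (j - 1)) →
        x ∈ Submodule.map Pim (Mj j))) :
    (∀ j : ZMod n,
      (Mj (j + 1) ≤ Submodule.map Pim (Mj j) ⊔ Submodule.map V (Mj (j + 2))) ∧
      (∀ x ∈ Mj j, Pim x ∈ Submodule.map V (Mj (j + 2)) →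
        x ∈ Submodule.map V (Mj (j + 1)))) ∧
    ((∃ N : ℕ, ∀ x : M, (Pim ^ N) x ∈ LinearMap.range V) →
      LinearMap.range V = ⊤) := by

  constructor
  · intro j
    constructor
    · have h := (hVbij (j + 1)).1
      have e1 : j + 1 - 1 = j := by ring
      have e2 : j + 1 + 1 = j + 2 := by ring
      rw [e1, e2] at h
      exact h.trans (le_of_eq (sup_comm _ _))
    · intro x hx hPx
      obtain ⟨y, hy, hyx⟩ := hPx
      have hy2 : y ∈ Mj (j + 1 + 1) := by rwa [show j + 1 + 1 = j + 2 by ring]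
      have hmem : V y ∈ Submodule.map Pim (Mj (j + 1 - 1)) := by
        rw [show j + 1 - 1 = j by ring]
        exact ⟨x, hx, hyx.symm⟩
      obtain ⟨z, hz, hzy⟩ := (hVbij (j + 1)).2 y hy2 hmem
      refine ⟨z, hz, ?_⟩
      apply hPiminj
      rw [hcomm z, hzy, hyx]
  · rintro ⟨N, hN⟩
    have stepA : ∀ x : M, x ∈ LinearMap.range V ⊔ LinearMap.range Pim := by
      have htop : (⊤ : Submodule (WittVector p k) M) ≤
          LinearMap.range V ⊔ LinearMap.range Pim := by
        rw [← hinternal.submodule_iSup_eq_top]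
        apply iSup_le
        intro j
        refine (hVbij j).1.trans (sup_le_sup ?_ ?_)
        · exact LinearMap.map_le_range
        · exact LinearMap.map_le_range
      exact fun x => htop trivial
    have hcommN : ∀ (m : ℕ) (x : M), (Pim ^ m) (V x) = V ((Pim ^ m) x) := by
      intro m
      induction m with
      | zero => intro x; simp
      | succ m ih =>
        intro x
        rw [pow_succ, Module.End.mul_apply, Module.End.mul_apply, hcomm, ih]
    have stepB : ∀ m : ℕ, ∀ x : M, ∃ a b : M, x = V a + (Pim ^ m) b := by
      intro m
      induction m with
      | zero => intro x; exact ⟨0, x, by simp⟩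
      | succ m ih =>
        intro x
        obtain ⟨a, b, hab⟩ := ih x
        rcases Submodule.mem_sup.1 (stepA b) with ⟨u, hu, v, hv, huv⟩
        obtain ⟨c, hc⟩ := hu
        obtain ⟨d, hd⟩ := hv
        refine ⟨a + (Pim ^ m) c, d, ?_⟩
        rw [hab, ← huv, ← hc, ← hd, map_add (Pim ^ m), map_add V, ← hcommN m c,
          pow_succ, Module.End.mul_apply]
        abel
    rw [eq_top_iff]
    intro x _
    obtain ⟨a, b, hab⟩ := stepB N x
    obtain ⟨c, hc⟩ := hN b
    exact ⟨a + c, by rw [map_add, hc, ← hab]⟩
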